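/- With the setup of the previous item, for any measurable function θ̂ : [0,1] → [0,1], define γ_0(x) = 4(1−λ)(√((1−θ̂(x))/(1−θ_0(x))) − 1) and γ_1(x) = 4λ(√(θ̂(x)/θ_0(x)) − 1), where θ_0 takes values in (0,1). Then −∫γ_0 dμ_0 − ∫γ_1 dμ_1 = 2∫(√θ̂ − √θ_0)² dG + 2∫(√(1−θ̂) − √(1−θ_0))² dG ≥ ∫(θ̂ − θ_0)² dG. -/

import Mathlib

open MeasureTheory

private theorem stmt14_ptineq (a b : ℝ) (ha : a ∈ Set.Icc (0:ℝ) 1) (hb : b ∈ Set.Ioo (0:ℝ) 1) :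
    (a - b)^2 ≤ 2*(Real.sqrt a - Real.sqrt b)^2 + 2*(Real.sqrt (1-a) - Real.sqrt (1-b))^2 := by
  obtain ⟨ha0, ha1⟩ := ha
  obtain ⟨hb0, hb1⟩ := hb
  have h1 : Real.sqrt a ^ 2 = a := Real.sq_sqrt ha0
  have h2 : Real.sqrt b ^ 2 = b := Real.sq_sqrt hb0.le
  have h3 : Real.sqrt (1-a) ^ 2 = 1-a := Real.sq_sqrt (by linarith)
  have h4 : Real.sqrt (1-b) ^ 2 = 1-b := Real.sq_sqrt (by linarith)
  have n1 := Real.sqrt_nonneg a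
  have n2 := Real.sqrt_nonneg b
  have n3 := Real.sqrt_nonneg (1-a)
  have n4 := Real.sqrt_nonneg (1-b)
  set sa := Real.sqrt a
  set sb := Real.sqrt b
  set sc := Real.sqrt (1-a)
  set sd := Real.sqrt (1-b)
  have u1 : sa ≤ 1 := by nlinarith
  have u2 : sb ≤ 1 := by nlinarith
  have u3 : sc ≤ 1 := by nlinarith
  have u4 : sd ≤ 1 := by nlinarith
  have key : (sa - sb) * (sa + sb) = (sd - sc) * (sd + sc) := by nlinarith
  nlinarith [sq_nonneg (sa - sb - (sd - sc)), sq_nonneg (sa - sb + (sd - sc)),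
    sq_nonneg (sa - sb), sq_nonneg (sd - sc), mul_self_nonneg ((sa-sb)*(sd-sc))]

private theorem stmt14_density_int {α : Type*} [MeasurableSpace α] (G : Measure α) (f g : α → ℝ)
    (hf : Measurable f) (hfn : ∀ x, 0 ≤ f x) :
    ∫ x, g x ∂(G.withDensity (fun x => ENNReal.ofReal (f x))) = ∫ x, f x * g x ∂G := by
  rw [show (fun x => ENNReal.ofReal (f x)) = (fun x => ((f x).toNNReal : ENNReal)) from rfl,
    integral_withDensity_eq_integral_smul (hf.real_toNNReal)]
  congr 1
  ext x
  simp [NNReal.smul_def, Real.coe_toNNReal _ (hfn x)]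

theorem stmt14 (lam : ℝ) (hlam : lam ∈ Set.Ioo (0:ℝ) 1)
    (μ0 μ1 : Measure (Set.Icc (0:ℝ) 1))
    [IsProbabilityMeasure μ0] [IsProbabilityMeasure μ1]
    (G : Measure (Set.Icc (0:ℝ) 1))
    (hG : G = ENNReal.ofReal lam • μ1 + ENNReal.ofReal (1 - lam) • μ0)
    (θ0 : Set.Icc (0:ℝ) 1 → ℝ) (hθ0m : Measurable θ0)
    (hθ0 : ∀ x, θ0 x ∈ Set.Ioo (0:ℝ) 1)
    (hμ1d : μ1 = G.withDensity (fun x => ENNReal.ofReal (θ0 x / lam)))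
    (hμ0d : μ0 = G.withDensity (fun x => ENNReal.ofReal ((1 - θ0 x) / (1 - lam))))
    (θhat : Set.Icc (0:ℝ) 1 → ℝ) (hθhatm : Measurable θhat)
    (hθhat : ∀ x, θhat x ∈ Set.Icc (0:ℝ) 1)
    (γ0 γ1 : Set.Icc (0:ℝ) 1 → ℝ)
    (hγ0 : ∀ x, γ0 x = 4 * (1 - lam) * (Real.sqrt ((1 - θhat x) / (1 - θ0 x)) - 1))
    (hγ1 : ∀ x, γ1 x = 4 * lam * (Real.sqrt (θhat x / θ0 x) - 1)) :
    (-∫ x, γ0 x ∂μ0 - ∫ x, γ1 x ∂μ1 =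
      2 * ∫ x, (Real.sqrt (θhat x) - Real.sqrt (θ0 x)) ^ 2 ∂G +
      2 * ∫ x, (Real.sqrt (1 - θhat x) - Real.sqrt (1 - θ0 x)) ^ 2 ∂G) ∧
    (2 * ∫ x, (Real.sqrt (θhat x) - Real.sqrt (θ0 x)) ^ 2 ∂G +
      2 * ∫ x, (Real.sqrt (1 - θhat x) - Real.sqrt (1 - θ0 x)) ^ 2 ∂G ≥
      ∫ x, (θhat x - θ0 x) ^ 2 ∂G) := by
  obtain ⟨hl0, hl1⟩ := hlam
  haveI : IsFiniteMeasure G := by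
    constructor
    rw [hG]
    simp only [Measure.add_apply, Measure.smul_apply, smul_eq_mul, measure_univ, mul_one]
    exact ENNReal.add_lt_top.2 ⟨ENNReal.ofReal_lt_top, ENNReal.ofReal_lt_top⟩
  -- measurability helpers
  have msq : ∀ f : Set.Icc (0:ℝ) 1 → ℝ, Measurable f →
      Measurable fun x => Real.sqrt (f x) := fun f hf =>
    Real.continuous_sqrt.measurable.comp hf
  have m1 : Measurable fun x => Real.sqrt (θhat x) := msq _ hθhatm
  have m2 : Measurable fun x => Real.sqrt (θ0 x) := msq _ hθ0m
  have m3 : Measurable fun x => Real.sqrt (1 - θhat x) := msq _ (measurable_const.sub hθhatm)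
  have m4 : Measurable fun x => Real.sqrt (1 - θ0 x) := msq _ (measurable_const.sub hθ0m)
  -- abbreviations (plain functions, no `set`)
  let F0 : Set.Icc (0:ℝ) 1 → ℝ :=
    fun x => 4 * (Real.sqrt (1 - θhat x) * Real.sqrt (1 - θ0 x) - (1 - θ0 x))
  let F1 : Set.Icc (0:ℝ) 1 → ℝ :=
    fun x => 4 * (Real.sqrt (θhat x) * Real.sqrt (θ0 x) - θ0 x)
  let A : Set.Icc (0:ℝ) 1 → ℝ :=
    fun x => (Real.sqrt (θhat x) - Real.sqrt (θ0 x)) ^ 2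
  let B : Set.Icc (0:ℝ) 1 → ℝ :=
    fun x => (Real.sqrt (1 - θhat x) - Real.sqrt (1 - θ0 x)) ^ 2
  -- integral conversions
  have hI0 : ∫ x, γ0 x ∂μ0 = ∫ x, F0 x ∂G := by
    rw [hμ0d, stmt14_density_int G (fun x => (1 - θ0 x) / (1 - lam)) γ0
      ((measurable_const.sub hθ0m).div_const _)
      (fun x => div_nonneg (by linarith [(hθ0 x).2]) (by linarith))]
    refine integral_congr_ae (ae_of_all _ fun x => ?_)
    show (1 - θ0 x) / (1 - lam) * γ0 x = F0 x
    have h2 : (0:ℝ) < 1 - θ0 x := by linarith [(hθ0 x).2]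
    have hs : Real.sqrt (1 - θ0 x) ≠ 0 := ne_of_gt (Real.sqrt_pos.2 h2)
    have hl : (1:ℝ) - lam ≠ 0 := by linarith
    have hss : Real.sqrt (1 - θ0 x) ^ 2 = 1 - θ0 x := Real.sq_sqrt h2.le
    show (1 - θ0 x) / (1 - lam) * γ0 x =
      4 * (Real.sqrt (1 - θhat x) * Real.sqrt (1 - θ0 x) - (1 - θ0 x))
    rw [hγ0, Real.sqrt_div (by linarith [(hθhat x).2])]
    field_simp
    linear_combination (-Real.sqrt (1 - θhat x)) * hss
  have hI1 : ∫ x, γ1 x ∂μ1 = ∫ x, F1 x ∂G := by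
    rw [hμ1d, stmt14_density_int G _ γ1
      (hθ0m.div_const _)
      (fun x => div_nonneg (by linarith [(hθ0 x).1]) hl0.le)]
    refine integral_congr_ae (ae_of_all _ fun x => ?_)
    show θ0 x / lam * γ1 x = F1 x
    have h2 : (0:ℝ) < θ0 x := (hθ0 x).1
    have hs : Real.sqrt (θ0 x) ≠ 0 := ne_of_gt (Real.sqrt_pos.2 h2)
    have hl : lam ≠ 0 := ne_of_gt hl0
    have hss : Real.sqrt (θ0 x) ^ 2 = θ0 x := Real.sq_sqrt h2.le
    show θ0 x / lam * γ1 x = 4 * (Real.sqrt (θhat x) * Real.sqrt (θ0 x) - θ0 x)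
    rw [hγ1, Real.sqrt_div (hθhat x).1]
    field_simp
    linear_combination (-Real.sqrt (θhat x)) * hss
  -- integrability of bounded measurable functions
  have int_of : ∀ f : Set.Icc (0:ℝ) 1 → ℝ, Measurable f → (∀ x, |f x| ≤ 8) →
      Integrable f G := fun f hm hb =>
    ⟨hm.aestronglyMeasurable,
      HasFiniteIntegral.of_bounded (C := 8) (ae_of_all _ fun x => by
        simpa [Real.norm_eq_abs] using hb x)⟩
  have hbounds : ∀ x, (0 ≤ Real.sqrt (θhat x) ∧ Real.sqrt (θhat x) ≤ 1) ∧
      (0 ≤ Real.sqrt (θ0 x) ∧ Real.sqrt (θ0 x) ≤ 1) ∧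
      (0 ≤ Real.sqrt (1 - θhat x) ∧ Real.sqrt (1 - θhat x) ≤ 1) ∧
      (0 ≤ Real.sqrt (1 - θ0 x) ∧ Real.sqrt (1 - θ0 x) ≤ 1) := by
    intro x
    obtain ⟨p1, p2⟩ := hθhat x
    obtain ⟨q1, q2⟩ := hθ0 x
    exact ⟨⟨Real.sqrt_nonneg _, Real.sqrt_le_one.2 p2⟩,
      ⟨Real.sqrt_nonneg _, Real.sqrt_le_one.2 q2.le⟩,
      ⟨Real.sqrt_nonneg _, Real.sqrt_le_one.2 (by linarith)⟩,
      ⟨Real.sqrt_nonneg _, Real.sqrt_le_one.2 (by linarith)⟩⟩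
  have hF0int : Integrable F0 G := by
    refine int_of F0 (((m3.mul m4).sub (measurable_const.sub hθ0m)).const_mul 4) fun x => ?_
    obtain ⟨_, _, ⟨c1, c2⟩, d1, d2⟩ := hbounds x
    obtain ⟨q1, q2⟩ := hθ0 x
    show |4 * (Real.sqrt (1 - θhat x) * Real.sqrt (1 - θ0 x) - (1 - θ0 x))| ≤ 8
    rw [abs_le]; constructor <;> nlinarith
  have hF1int : Integrable F1 G := by
    refine int_of F1 (((m1.mul m2).sub hθ0m).const_mul 4) fun x => ?_
    obtain ⟨⟨a1, a2⟩, ⟨b1, b2⟩, _, _⟩ := hbounds x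
    obtain ⟨q1, q2⟩ := hθ0 x
    show |4 * (Real.sqrt (θhat x) * Real.sqrt (θ0 x) - θ0 x)| ≤ 8
    rw [abs_le]; constructor <;> nlinarith
  have hAint : Integrable A G := by
    refine int_of A ((m1.sub m2).pow_const 2) fun x => ?_
    obtain ⟨⟨a1, a2⟩, ⟨b1, b2⟩, _, _⟩ := hbounds x
    show |(Real.sqrt (θhat x) - Real.sqrt (θ0 x)) ^ 2| ≤ 8
    rw [abs_le]; constructor <;> nlinarith
  have hBint : Integrable B G := by
    refine int_of B ((m3.sub m4).pow_const 2) fun x => ?_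
    obtain ⟨_, _, ⟨c1, c2⟩, d1, d2⟩ := hbounds x
    show |(Real.sqrt (1 - θhat x) - Real.sqrt (1 - θ0 x)) ^ 2| ≤ 8
    rw [abs_le]; constructor <;> nlinarith
  have hCint : Integrable (fun x => (θhat x - θ0 x) ^ 2) G := by
    refine int_of _ ((hθhatm.sub hθ0m).pow_const 2) fun x => ?_
    obtain ⟨p1, p2⟩ := hθhat x
    obtain ⟨q1, q2⟩ := hθ0 x
    rw [abs_le]; constructor <;> nlinarith
  -- pointwise identity : -F0 - F1 = 2A + 2B
  have hpt : ∀ x, -F0 x - F1 x = 2 * A x + 2 * B x := by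
    intro x
    obtain ⟨p1, p2⟩ := hθhat x
    obtain ⟨q1, q2⟩ := hθ0 x
    have e1 : Real.sqrt (θhat x) ^ 2 = θhat x := Real.sq_sqrt p1
    have e2 : Real.sqrt (θ0 x) ^ 2 = θ0 x := Real.sq_sqrt q1.le
    have e3 : Real.sqrt (1 - θhat x) ^ 2 = 1 - θhat x := Real.sq_sqrt (by linarith)
    have e4 : Real.sqrt (1 - θ0 x) ^ 2 = 1 - θ0 x := Real.sq_sqrt (by linarith)
    show -(4 * (Real.sqrt (1 - θhat x) * Real.sqrt (1 - θ0 x) - (1 - θ0 x)))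
        - 4 * (Real.sqrt (θhat x) * Real.sqrt (θ0 x) - θ0 x) =
      2 * (Real.sqrt (θhat x) - Real.sqrt (θ0 x)) ^ 2 +
      2 * (Real.sqrt (1 - θhat x) - Real.sqrt (1 - θ0 x)) ^ 2
    nlinarith [e1, e2, e3, e4]
  have hnF0 : Integrable (fun x => -F0 x) G := hF0int.neg
  have h2A : Integrable (fun x => 2 * A x) G := hAint.const_mul 2
  have h2B : Integrable (fun x => 2 * B x) G := hBint.const_mul 2
  have hmain : -∫ x, F0 x ∂G - ∫ x, F1 x ∂G =
      2 * ∫ x, A x ∂G + 2 * ∫ x, B x ∂G := by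
    calc -∫ x, F0 x ∂G - ∫ x, F1 x ∂G
        = ∫ x, (-F0 x - F1 x) ∂G := by
          rw [integral_sub hnF0 hF1int, integral_neg]
      _ = ∫ x, (2 * A x + 2 * B x) ∂G :=
          integral_congr_ae (ae_of_all _ fun x => hpt x)
      _ = 2 * ∫ x, A x ∂G + 2 * ∫ x, B x ∂G := by
          rw [integral_add h2A h2B, integral_const_mul, integral_const_mul]
  constructor
  · rw [hI0, hI1]
    exact hmain
  · have hptle : ∀ x, (θhat x - θ0 x) ^ 2 ≤ 2 * A x + 2 * B x := fun x =>
      stmt14_ptineq (θhat x) (θ0 x) (hθhat x) (hθ0 x)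
    have hDint : Integrable (fun x => 2 * A x + 2 * B x) G := h2A.add h2B
    have := integral_mono hCint hDint hptle
    rw [integral_add h2A h2B, integral_const_mul, integral_const_mul] at this
    exact this
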